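/- Let J be a real antisymmetric d×d matrix, and let γ, μ ∈ ℝ. Consider the real 2d×2d block matrix B = [[μJ, −I],[I, γI + μJ]]. Then the spectrum of B over ℂ (i.e., of its complexification) equals {μλ + γ/2 + c : λ ∈ σ(J)} ∪ {μλ + γ/2 − c : λ ∈ σ(J)}, where σ(J) denotes the complex spectrum of J and c ∈ ℂ is any complex number with c² = (γ/2)² − 1. -/
import Mathlib

open Matrix Polynomial

private lemma aux_mem_spec {n : Type*} [Fintype n] [DecidableEq n] (A : Matrix n n ℂ) (w : ℂ) :
    w ∈ spectrum ℂ A ↔ (w • (1 : Matrix n n ℂ) - A).det = 0 := by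
  rw [spectrum.mem_iff, Matrix.isUnit_iff_isUnit_det, isUnit_iff_ne_zero, not_ne_iff,
    Algebra.algebraMap_eq_smul_one]

private lemma aux_spec_empty {n : Type*} [Fintype n] [DecidableEq n] [IsEmpty n]
    (A : Matrix n n ℂ) : spectrum ℂ A = ∅ := by
  ext w
  simp [spectrum.mem_iff, isUnit_of_subsingleton]

/-- Spectrum of the drift matrix `B = [[μJ, -I],[I, γI + μJ]]` of the equally
perturbed underdamped Langevin dynamics: it equals
`{μλ + γ/2 ± c : λ ∈ σ(J)}` where `c² = (γ/2)² - 1`. -/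
theorem stmt2 {d : ℕ} (J : Matrix (Fin d) (Fin d) ℝ) (hJ : Jᵀ = -J)
    (γ μ : ℝ) (c : ℂ) (hc : c ^ 2 = ((γ : ℂ) / 2) ^ 2 - 1) :
    spectrum ℂ
        ((fromBlocks (μ • J) (-1) 1 (γ • (1 : Matrix (Fin d) (Fin d) ℝ) + μ • J)).map
          (algebraMap ℝ ℂ)) =
      {z : ℂ | ∃ l ∈ spectrum ℂ (J.map (algebraMap ℝ ℂ)), z = (μ : ℂ) * l + (γ : ℂ) / 2 + c} ∪
      {z : ℂ | ∃ l ∈ spectrum ℂ (J.map (algebraMap ℝ ℂ)), z = (μ : ℂ) * l + (γ : ℂ) / 2 - c} := by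
  classical
  set g : ℂ := (γ : ℂ) / 2 with hg
  set a : ℂ := (μ : ℂ) with ha
  set N : Matrix (Fin d) (Fin d) ℂ := J.map (algebraMap ℝ ℂ) with hNdef
  set Bm : Matrix (Fin d ⊕ Fin d) (Fin d ⊕ Fin d) ℂ :=
    (fromBlocks (μ • J) (-1) 1 (γ • (1 : Matrix (Fin d) (Fin d) ℝ) + μ • J)).map
      (algebraMap ℝ ℂ) with hBm
  rcases Nat.eq_zero_or_pos d with hd | hd
  · subst hd
    rw [aux_spec_empty, aux_spec_empty]
    simp
  · haveI : Nonempty (Fin d) := Fin.pos_iff_nonempty.mp hd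
    have hN_ne : (spectrum ℂ N).Nonempty :=
      spectrum.nonempty_of_isAlgClosed_of_finiteDimensional ℂ N
    ext z
    simp only [Set.mem_union, Set.mem_setOf_eq]
    set A₁ : Matrix (Fin d) (Fin d) ℂ := z • 1 - a • N with hA₁
    set D₁ : Matrix (Fin d) (Fin d) ℂ := (z - γ) • 1 - a • N with hD₁
    have hblock : z • (1 : Matrix (Fin d ⊕ Fin d) (Fin d ⊕ Fin d) ℂ) - Bm =
        fromBlocks A₁ 1 (-1) D₁ := by
      ext i j
      rcases i with i | i <;> rcases j with j | j <;>
        simp only [Matrix.sub_apply, Matrix.smul_apply, Matrix.one_apply, Matrix.map_apply,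
          Matrix.fromBlocks_apply₁₁, Matrix.fromBlocks_apply₁₂, Matrix.fromBlocks_apply₂₁,
          Matrix.fromBlocks_apply₂₂, Matrix.add_apply, Matrix.neg_apply, hA₁, hD₁, hNdef, hBm,
          Sum.inl.injEq, Sum.inr.injEq, Matrix.one_apply, smul_eq_mul, Complex.coe_algebraMap] <;>
        push_cast <;> split_ifs <;> push_cast [ha] <;> ring
    -- permutation matrix trick
    set P : Matrix (Fin d ⊕ Fin d) (Fin d ⊕ Fin d) ℂ := fromBlocks 0 1 1 0 with hP
    have hPP : P * P = 1 := by
      rw [hP, Matrix.fromBlocks_multiply]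
      simp [Matrix.fromBlocks_one]
    have hdetP : P.det ≠ 0 := by
      have h1 : P.det * P.det = 1 := by rw [← Matrix.det_mul, hPP, Matrix.det_one]
      exact left_ne_zero_of_mul_eq_one h1
    have hMP : (fromBlocks A₁ 1 (-1) D₁) * P = fromBlocks 1 A₁ D₁ (-1) := by
      rw [hP, Matrix.fromBlocks_multiply]
      simp
    have hpow : ((-1 : ℂ) ^ Fintype.card (Fin d)) ≠ 0 :=
      pow_ne_zero _ (neg_ne_zero.mpr one_ne_zero)
    have hdetprod : (fromBlocks A₁ 1 (-1) D₁).det * P.det =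
        (-1 : ℂ) ^ Fintype.card (Fin d) * (1 + D₁ * A₁).det := by
      rw [← Matrix.det_mul, hMP, Matrix.det_fromBlocks_one₁₁,
        show (-1 : Matrix (Fin d) (Fin d) ℂ) - D₁ * A₁ = -(1 + D₁ * A₁) by abel,
        Matrix.det_neg]
    have key : (fromBlocks A₁ 1 (-1) D₁).det = 0 ↔ (1 + D₁ * A₁).det = 0 := by
      constructor
      · intro h
        have := hdetprod
        rw [h, zero_mul] at this
        rcases mul_eq_zero.mp this.symm with h' | h'
        · exact absurd h' hpow
        · exact h'
      · intro h
        have := hdetprod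
        rw [h, mul_zero] at this
        rcases mul_eq_zero.mp this with h' | h'
        · exact h'
        · exact absurd h' hdetP
    -- the quadratic polynomial
    set p : ℂ[X] := (C (z - g - c) - C a * X) * (C (z - g + c) - C a * X) with hp
    have hγ2 : (γ : ℂ) = g + g := by rw [hg]; ring
    have haeval : aeval N p = 1 + D₁ * A₁ := by
      rw [hp]
      simp only [_root_.map_mul, map_sub, aeval_C, aeval_X,
        Algebra.algebraMap_eq_smul_one]
      rw [hA₁, hD₁, hγ2]
      simp only [mul_sub, sub_mul, smul_mul_assoc, mul_smul_comm, smul_smul,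
        Matrix.mul_one, Matrix.one_mul, smul_one_mul]
      match_scalars <;> first | ring1 | linear_combination -hc
    have h0 : (0 : ℂ) ∈ spectrum ℂ (aeval N p) ↔ (aeval N p).det = 0 := by
      rw [aux_mem_spec, zero_smul, zero_sub, Matrix.det_neg]
      constructor
      · intro h
        rcases mul_eq_zero.mp h with h' | h'
        · exact absurd h' (pow_ne_zero _ (neg_ne_zero.mpr one_ne_zero))
        · exact h'
      · intro h
        rw [h, mul_zero]
    have hsm : (0 : ℂ) ∈ spectrum ℂ (aeval N p) ↔
        ∃ l ∈ spectrum ℂ N, eval l p = 0 := by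
      rw [spectrum.map_polynomial_aeval_of_nonempty N p hN_ne]
      constructor
      · rintro ⟨l, hl, hev⟩
        exact ⟨l, hl, hev⟩
      · rintro ⟨l, hl, hev⟩
        exact ⟨l, hl, hev⟩
    rw [aux_mem_spec, hblock, key, ← haeval, ← h0, hsm]
    constructor
    · rintro ⟨l, hl, hev⟩
      rw [hp] at hev
      simp only [eval_mul, eval_sub, eval_C, eval_X, eval_mul] at hev
      rcases mul_eq_zero.mp hev with h' | h'
      · exact Or.inl ⟨l, hl, by linear_combination h'⟩
      · exact Or.inr ⟨l, hl, by linear_combination h'⟩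
    · rintro (⟨l, hl, hev⟩ | ⟨l, hl, hev⟩)
      · refine ⟨l, hl, ?_⟩
        rw [hp]
        simp only [eval_mul, eval_sub, eval_C, eval_X]
        rw [show z - g - c - a * l = 0 by linear_combination hev, zero_mul]
      · refine ⟨l, hl, ?_⟩
        rw [hp]
        simp only [eval_mul, eval_sub, eval_C, eval_X]
        rw [show z - g + c - a * l = 0 by linear_combination hev, mul_zero]
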